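/- Consider the damped oscillator m ĥ'' + r ĥ' + k ĥ = P_g with P_g = 2τP_s ĥ'/(h₀ + ĥ + τĥ'), m, r, k, τ, P_s, h₀ > 0. Linearizing P_g about ĥ = 0, ĥ' = 0 gives P_g ≈ (2τP_s/h₀)ĥ', so the linearized equation is m ĥ'' + (r - 2τP_s/h₀)ĥ' + k ĥ = 0, and the zero solution of the linearized equation loses asymptotic stability (effective damping becomes zero) exactly when P_s = h₀r/(2τ). -/

import Mathlib

private lemma quad_stable (m k b : ℝ) (hm : 0 < m) (hk : 0 < k) :
    (∀ z : ℂ, (m : ℂ) * z ^ 2 + (b : ℂ) * z + (k : ℂ) = 0 → z.re < 0) ↔ 0 < b := by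
  constructor
  · intro hall
    by_contra hb0
    push_neg at hb0
    by_cases hdisc : b ^ 2 - 4 * m * k ≥ 0
    · set s := Real.sqrt (b ^ 2 - 4 * m * k) with hsdef
      have hs2 : s ^ 2 = b ^ 2 - 4 * m * k := Real.sq_sqrt hdisc
      have hs0 : 0 ≤ s := Real.sqrt_nonneg _
      have hx : m * ((-b + s) / (2 * m)) ^ 2 + b * ((-b + s) / (2 * m)) + k = 0 := by
        field_simp
        nlinarith [hs2]
      have hroot : (m : ℂ) * (((-b + s) / (2 * m) : ℝ) : ℂ) ^ 2 +
          (b : ℂ) * (((-b + s) / (2 * m) : ℝ) : ℂ) + (k : ℂ) = 0 := by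
        exact_mod_cast congrArg (fun y : ℝ => (y : ℂ)) hx
      have h1 := hall _ hroot
      rw [Complex.ofReal_re] at h1
      nlinarith [div_nonneg (by linarith : (0:ℝ) ≤ -b + s) (by linarith : (0:ℝ) ≤ 2*m)]
    · push_neg at hdisc
      set t := Real.sqrt (4 * m * k - b ^ 2) with htdef
      have ht2 : t ^ 2 = 4 * m * k - b ^ 2 := Real.sq_sqrt (by linarith)
      have ht2' : ((t : ℂ)) ^ 2 = 4 * m * k - (b : ℂ) ^ 2 := by exact_mod_cast ht2
      set z : ℂ := ((-b / (2 * m) : ℝ) : ℂ) + ((t / (2 * m) : ℝ) : ℂ) * Complex.I with hzdef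
      have hm' : (m : ℂ) ≠ 0 := by exact_mod_cast hm.ne'
      have hroot : (m : ℂ) * z ^ 2 + (b : ℂ) * z + (k : ℂ) = 0 := by
        rw [hzdef]
        push_cast
        field_simp
        linear_combination (t:ℂ)^2 * Complex.I_sq - ht2'
      have h1 := hall z hroot
      have hre : z.re = -b / (2 * m) := by
        rw [hzdef]
        simp only [Complex.add_re, Complex.mul_re, Complex.ofReal_re, Complex.ofReal_im,
          Complex.I_re, Complex.I_im]
        ring
      rw [hre] at h1
      nlinarith [div_nonneg (by linarith : (0:ℝ) ≤ -b) (by linarith : (0:ℝ) ≤ 2*m)]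
  · intro hbpos z hz
    by_contra hre
    push_neg at hre
    obtain ⟨x, y⟩ := z
    have h1 : m * (x ^ 2 - y ^ 2) + b * x + k = 0 := by
      have := congrArg Complex.re hz
      simpa [Complex.mul_re, Complex.add_re, pow_two] using this
    have h2 : y * (2 * m * x + b) = 0 := by
      have := congrArg Complex.im hz
      simp [Complex.mul_im, Complex.add_im, pow_two] at this
      nlinarith [this]
    have hx : 0 ≤ x := hre
    have hy : y = 0 := by
      rcases mul_eq_zero.mp h2 with h | h
      · exact h
      · nlinarith
    rw [hy] at h1
    nlinarith

/-- linearization of the Titze driving pressure and the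
threshold subglottal pressure. The driving force is
`P_g(h, v) = 2 τ P_s v / (h₀ + h + τ v)`; its linearization at `(0,0)` is
`(h, v) ↦ (2 τ P_s / h₀) v`, and the zero solution of the linearized
oscillator `m h'' + (r - 2 τ P_s / h₀) h' + k h = 0` is asymptotically stable
(all characteristic roots in the open left half plane) exactly for
`P_s < h₀ r / (2τ)`, the effective damping vanishing exactly at
`P_s = h₀ r / (2τ)`. -/
theorem stmt_12 (m r k τ P_s h₀ : ℝ)
    (hm : 0 < m) (hr : 0 < r) (hk : 0 < k) (hτ : 0 < τ) (hP : 0 < P_s) (hh : 0 < h₀) :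
    (∀ p : ℝ × ℝ,
      fderiv ℝ (fun q : ℝ × ℝ => 2 * τ * P_s * q.2 / (h₀ + q.1 + τ * q.2)) (0, 0) p
        = (2 * τ * P_s / h₀) * p.2) ∧
    (r - 2 * τ * P_s / h₀ = 0 ↔ P_s = h₀ * r / (2 * τ)) ∧
    ((∀ z : ℂ, (m : ℂ) * z ^ 2 + ((r - 2 * τ * P_s / h₀ : ℝ) : ℂ) * z + (k : ℂ) = 0 →
        z.re < 0) ↔ P_s < h₀ * r / (2 * τ)) := by
  have hh' : h₀ ≠ 0 := hh.ne'
  refine ⟨?_, ?_, ?_⟩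
  · intro p
    have hN : HasFDerivAt (fun q : ℝ × ℝ => 2 * τ * P_s * q.2)
        ((2 * τ * P_s) • ContinuousLinearMap.snd ℝ ℝ ℝ) ((0, 0) : ℝ × ℝ) :=
      (hasFDerivAt_snd).const_mul _
    have hD : HasFDerivAt (fun q : ℝ × ℝ => h₀ + q.1 + τ * q.2)
        (((0 : ℝ × ℝ →L[ℝ] ℝ) + ContinuousLinearMap.fst ℝ ℝ ℝ) +
          τ • ContinuousLinearMap.snd ℝ ℝ ℝ) ((0, 0) : ℝ × ℝ) :=
      ((hasFDerivAt_const h₀ _).add hasFDerivAt_fst).add ((hasFDerivAt_snd).const_mul τ)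
    have hval : (fun q : ℝ × ℝ => h₀ + q.1 + τ * q.2) ((0, 0) : ℝ × ℝ) = h₀ := by simp
    have hInv : HasFDerivAt (fun x : ℝ => x⁻¹)
        (ContinuousLinearMap.smulRight (1 : ℝ →L[ℝ] ℝ) (-(h₀ ^ 2)⁻¹)) h₀ :=
      hasFDerivAt_inv hh'
    have hInvD : HasFDerivAt (fun q : ℝ × ℝ => (h₀ + q.1 + τ * q.2)⁻¹)
        ((ContinuousLinearMap.smulRight (1 : ℝ →L[ℝ] ℝ) (-(h₀ ^ 2)⁻¹)).comp
          (((0 : ℝ × ℝ →L[ℝ] ℝ) + ContinuousLinearMap.fst ℝ ℝ ℝ) +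
            τ • ContinuousLinearMap.snd ℝ ℝ ℝ)) ((0, 0) : ℝ × ℝ) := by
      have hInv' : HasFDerivAt (fun x : ℝ => x⁻¹)
          (ContinuousLinearMap.smulRight (1 : ℝ →L[ℝ] ℝ) (-(h₀ ^ 2)⁻¹))
          ((fun q : ℝ × ℝ => h₀ + q.1 + τ * q.2) ((0, 0) : ℝ × ℝ)) := by
        rw [hval]; exact hInv
      exact hInv'.comp ((0, 0) : ℝ × ℝ) hD
    have hProd := hN.mul hInvD
    have hfd := hProd.fderiv
    have heq : (fun q : ℝ × ℝ => 2 * τ * P_s * q.2 / (h₀ + q.1 + τ * q.2)) =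
        (fun q : ℝ × ℝ => (2 * τ * P_s * q.2) * (h₀ + q.1 + τ * q.2)⁻¹) := by
      funext q; rw [div_eq_mul_inv]
    rw [heq, show (fun q : ℝ × ℝ => (2 * τ * P_s * q.2) * (h₀ + q.1 + τ * q.2)⁻¹) =
        ((fun q : ℝ × ℝ => 2 * τ * P_s * q.2) * fun q : ℝ × ℝ => (h₀ + q.1 + τ * q.2)⁻¹) from rfl,
      hfd]
    simp only [ContinuousLinearMap.add_apply, ContinuousLinearMap.smul_apply,
      ContinuousLinearMap.comp_apply, ContinuousLinearMap.smulRight_apply,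
      ContinuousLinearMap.coe_fst', ContinuousLinearMap.coe_snd',
      ContinuousLinearMap.zero_apply, ContinuousLinearMap.one_apply, smul_eq_mul]
    field_simp
    ring
  · rw [sub_eq_zero, eq_div_iff hh', eq_div_iff (by positivity : (2 * τ : ℝ) ≠ 0)]
    constructor <;> intro h <;> nlinarith
  · rw [quad_stable m k _ hm hk, lt_div_iff₀ (by positivity : (0:ℝ) < 2 * τ), sub_pos,
      div_lt_iff₀ hh]
    constructor <;> intro h <;> nlinarith
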